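/- In the two-agent Partition instance (jobs A_i, B_i of length s_i for i = 1,…,n with s₁ < … < s_n and ∑ s_i = 2s; agent a prefers (A₁,B₁,…,A_n,B_n), agent b prefers (B₁,A₁,…,B_n,A_n)), let σ be any schedule in which, for every i, the two jobs A_i and B_i occupy two consecutive positions 2i−1 and 2i (in either order). Then T(σ,σ_a) + T(σ,σ_b) = 2s; specifically, each pair placed in order (A_i, B_i) contributes s_i to agent b's tardiness and 0 to agent a's, and each pair placed in order (B_i, A_i) contributes s_i to agent a's tardiness and 0 to agent b's. -/
import Mathlib


/-- Completion time of job `i` in a schedule `τ : J ≃ Fin N` (a bijection from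
jobs to positions), with processing times `p`. -/
def completionTime {J : Type*} [Fintype J] {N : ℕ} (p : J → ℕ) (τ : J ≃ Fin N)
    (i : J) : ℕ :=
  ∑ j ∈ Finset.univ.filter (fun j => τ j ≤ τ i), p j

/-- Tardiness cost: `∑ i, max (0, C_i(τ) - C_i(σ))`. -/
def tardiness {J : Type*} [Fintype J] {N : ℕ} (p : J → ℕ) (τ σ : J ≃ Fin N) : ℕ :=
  ∑ i : J, (completionTime p τ i - completionTime p σ i)


/-- Length of the job at position `k`: both jobs of pair `k/2` have length `s (k/2)`. -/
def posLen {n : ℕ} (s : Fin n → ℕ) (k : Fin (2 * n)) : ℕ :=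
  s ⟨(k : ℕ) / 2, by have := k.2; omega⟩

/-- Completion time as a function of position only. -/
def Fcomp {n : ℕ} (s : Fin n → ℕ) (m : Fin (2 * n)) : ℕ :=
  ∑ k : Fin (2 * n), if k ≤ m then posLen s k else 0

lemma Fcomp_step {n : ℕ} (s : Fin n → ℕ) (a b : Fin (2 * n))
    (hab : (b : ℕ) = (a : ℕ) + 1) :
    Fcomp s b = Fcomp s a + posLen s b := by
  unfold Fcomp
  have key : ∀ k : Fin (2 * n),
      (if k ≤ b then posLen s k else 0)
        = (if k ≤ a then posLen s k else 0) + (if k = b then posLen s k else 0) := by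
    intro k
    rcases eq_or_ne k b with rfl | hk
    · have h1 : ¬ (k ≤ a) := by rw [Fin.le_def]; omega
      simp [h1]
    · have hkb : (k : ℕ) ≠ (b : ℕ) := fun h => hk (Fin.ext h)
      by_cases h1 : k ≤ a
      · have h2 : k ≤ b := by rw [Fin.le_def]; rw [Fin.le_def] at h1; omega
        simp [h1, h2, hk]
      · have h2 : ¬ (k ≤ b) := by
          rw [Fin.le_def]; rw [Fin.le_def] at h1; omega
        simp [h1, h2, hk]
    
  rw [Finset.sum_congr rfl (fun k _ => key k), Finset.sum_add_distrib,
    Finset.sum_ite_eq' Finset.univ b (posLen s)]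
  simp

lemma completion_eq_Fcomp {n : ℕ} (s : Fin n → ℕ)
    (τ : (Fin n ⊕ Fin n) ≃ Fin (2 * n))
    (hτ : ∀ i : Fin n,
      ((τ (Sum.inl i) : ℕ) = 2 * (i : ℕ) ∧ (τ (Sum.inr i) : ℕ) = 2 * (i : ℕ) + 1) ∨
      ((τ (Sum.inr i) : ℕ) = 2 * (i : ℕ) ∧ (τ (Sum.inl i) : ℕ) = 2 * (i : ℕ) + 1))
    (x : Fin n ⊕ Fin n) :
    completionTime (Sum.elim s s) τ x = Fcomp s (τ x) := by
  have hp : ∀ j, Sum.elim s s j = posLen s (τ j) := by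
    intro j
    rcases j with i | i <;>
    · rcases hτ i with ⟨h1, h2⟩ | ⟨h1, h2⟩ <;>
      · unfold posLen
        simp only [Sum.elim_inl, Sum.elim_inr]
        congr 1
        apply Fin.ext
        simp only [*]
        omega
  unfold completionTime
  rw [Finset.sum_filter]
  calc (∑ j, if τ j ≤ τ x then Sum.elim s s j else 0)
      = ∑ j, (fun k => if k ≤ τ x then posLen s k else 0) (τ j) := by
        apply Finset.sum_congr rfl
        intro j _
        simp only [hp j]
    _ = ∑ k, (if k ≤ τ x then posLen s k else 0) := Fintype.sum_equiv τ _ _ (fun j => rfl)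
    _ = Fcomp s (τ x) := rfl

lemma tard_apply {n : ℕ} (s : Fin n → ℕ)
    (τ ρ : (Fin n ⊕ Fin n) ≃ Fin (2 * n))
    (hτ : ∀ i : Fin n,
      ((τ (Sum.inl i) : ℕ) = 2 * (i : ℕ) ∧ (τ (Sum.inr i) : ℕ) = 2 * (i : ℕ) + 1) ∨
      ((τ (Sum.inr i) : ℕ) = 2 * (i : ℕ) ∧ (τ (Sum.inl i) : ℕ) = 2 * (i : ℕ) + 1))
    (hρ : ∀ i : Fin n,
      ((ρ (Sum.inl i) : ℕ) = 2 * (i : ℕ) ∧ (ρ (Sum.inr i) : ℕ) = 2 * (i : ℕ) + 1) ∨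
      ((ρ (Sum.inr i) : ℕ) = 2 * (i : ℕ) ∧ (ρ (Sum.inl i) : ℕ) = 2 * (i : ℕ) + 1)) :
    tardiness (Sum.elim s s) τ ρ
      = ∑ i : Fin n, ((Fcomp s (τ (Sum.inl i)) - Fcomp s (ρ (Sum.inl i)))
          + (Fcomp s (τ (Sum.inr i)) - Fcomp s (ρ (Sum.inr i)))) := by
  unfold tardiness
  simp only [completion_eq_Fcomp s τ hτ, completion_eq_Fcomp s ρ hρ]
  rw [Fintype.sum_sum_type, ← Finset.sum_add_distrib]

lemma posLen_eq {n : ℕ} (s : Fin n → ℕ) (k : Fin (2 * n)) (i : Fin n)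
    (h : (k : ℕ) = 2 * (i : ℕ) ∨ (k : ℕ) = 2 * (i : ℕ) + 1) :
    posLen s k = s i := by
  unfold posLen
  congr 1
  apply Fin.ext
  simp only []
  omega

/-- In the two-agent Partition instance (jobs `A_i = Sum.inl i`,
`B_i = Sum.inr i`, both of length `s i`, with `s₁ < … < s_n` summing to `2·sval`;
agent a prefers `(A₁,B₁,…,A_n,B_n)`, agent b prefers `(B₁,A₁,…,B_n,A_n)`), any
schedule `σ` placing each pair `A_i, B_i` at the two consecutive positions
`2i, 2i+1` (0-indexed, in either order) has
`T(σ,σa) = ∑_{i : B_i before A_i} s i`, `T(σ,σb) = ∑_{i : A_i before B_i} s i`,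
and total tardiness `T(σ,σa) + T(σ,σb) = 2·sval`. -/
theorem spt_schedule_tardiness_split (n : ℕ)
    (s : Fin n → ℕ) (hmono : StrictMono s) (hpos : ∀ i, 0 < s i)
    (sval : ℕ) (hsum : ∑ i : Fin n, s i = 2 * sval)
    (σa σb σ : (Fin n ⊕ Fin n) ≃ Fin (2 * n))
    (hσa : ∀ i : Fin n, (σa (Sum.inl i) : ℕ) = 2 * (i : ℕ) ∧
      (σa (Sum.inr i) : ℕ) = 2 * (i : ℕ) + 1)
    (hσb : ∀ i : Fin n, (σb (Sum.inr i) : ℕ) = 2 * (i : ℕ) ∧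
      (σb (Sum.inl i) : ℕ) = 2 * (i : ℕ) + 1)
    (hσ : ∀ i : Fin n,
      ((σ (Sum.inl i) : ℕ) = 2 * (i : ℕ) ∧ (σ (Sum.inr i) : ℕ) = 2 * (i : ℕ) + 1) ∨
      ((σ (Sum.inr i) : ℕ) = 2 * (i : ℕ) ∧ (σ (Sum.inl i) : ℕ) = 2 * (i : ℕ) + 1)) :
    tardiness (Sum.elim s s) σ σa
        = ∑ i ∈ Finset.univ.filter (fun i : Fin n => σ (Sum.inr i) < σ (Sum.inl i)), s i ∧
    tardiness (Sum.elim s s) σ σb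
        = ∑ i ∈ Finset.univ.filter (fun i : Fin n => σ (Sum.inl i) < σ (Sum.inr i)), s i ∧
    tardiness (Sum.elim s s) σ σa + tardiness (Sum.elim s s) σ σb = 2 * sval := by
  have hτa : ∀ i : Fin n,
      ((σa (Sum.inl i) : ℕ) = 2 * (i : ℕ) ∧ (σa (Sum.inr i) : ℕ) = 2 * (i : ℕ) + 1) ∨
      ((σa (Sum.inr i) : ℕ) = 2 * (i : ℕ) ∧ (σa (Sum.inl i) : ℕ) = 2 * (i : ℕ) + 1) :=
    fun i => Or.inl (hσa i)
  have hτb : ∀ i : Fin n,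
      ((σb (Sum.inl i) : ℕ) = 2 * (i : ℕ) ∧ (σb (Sum.inr i) : ℕ) = 2 * (i : ℕ) + 1) ∨
      ((σb (Sum.inr i) : ℕ) = 2 * (i : ℕ) ∧ (σb (Sum.inl i) : ℕ) = 2 * (i : ℕ) + 1) :=
    fun i => Or.inr ⟨(hσb i).1, (hσb i).2⟩
  have h1 : tardiness (Sum.elim s s) σ σa
      = ∑ i ∈ Finset.univ.filter (fun i : Fin n => σ (Sum.inr i) < σ (Sum.inl i)), s i := by
    rw [tard_apply s σ σa hσ hτa, Finset.sum_filter]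
    apply Finset.sum_congr rfl
    intro i _
    obtain ⟨f1, f2⟩ := hσa i
    rcases hσ i with ⟨e1, e2⟩ | ⟨e1, e2⟩
    · have hl : σ (Sum.inl i) = σa (Sum.inl i) := Fin.ext (by omega)
      have hr : σ (Sum.inr i) = σa (Sum.inr i) := Fin.ext (by omega)
      have hc : ¬ σ (Sum.inr i) < σ (Sum.inl i) := by rw [Fin.lt_def]; omega
      rw [if_neg hc, hl, hr]; simp
    · have hc : σ (Sum.inr i) < σ (Sum.inl i) := by rw [Fin.lt_def]; omega
      have hA : Fcomp s (σ (Sum.inl i))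
          = Fcomp s (σa (Sum.inl i)) + posLen s (σ (Sum.inl i)) :=
        Fcomp_step s _ _ (by omega)
      have hB : Fcomp s (σa (Sum.inr i))
          = Fcomp s (σ (Sum.inr i)) + posLen s (σa (Sum.inr i)) :=
        Fcomp_step s _ _ (by omega)
      have hlen : posLen s (σ (Sum.inl i)) = s i := posLen_eq s _ i (Or.inr e2)
      rw [if_pos hc]
      omega
  have h2 : tardiness (Sum.elim s s) σ σb
      = ∑ i ∈ Finset.univ.filter (fun i : Fin n => σ (Sum.inl i) < σ (Sum.inr i)), s i := by
    rw [tard_apply s σ σb hσ hτb, Finset.sum_filter]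
    apply Finset.sum_congr rfl
    intro i _
    obtain ⟨f1, f2⟩ := hσb i
    rcases hσ i with ⟨e1, e2⟩ | ⟨e1, e2⟩
    · have hc : σ (Sum.inl i) < σ (Sum.inr i) := by rw [Fin.lt_def]; omega
      have hA : Fcomp s (σ (Sum.inr i))
          = Fcomp s (σb (Sum.inr i)) + posLen s (σ (Sum.inr i)) :=
        Fcomp_step s _ _ (by omega)
      have hB : Fcomp s (σb (Sum.inl i))
          = Fcomp s (σ (Sum.inl i)) + posLen s (σb (Sum.inl i)) :=
        Fcomp_step s _ _ (by omega)
      have hlen : posLen s (σ (Sum.inr i)) = s i := posLen_eq s _ i (Or.inr e2)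
      rw [if_pos hc]
      omega
    · have hl : σ (Sum.inl i) = σb (Sum.inl i) := Fin.ext (by omega)
      have hr : σ (Sum.inr i) = σb (Sum.inr i) := Fin.ext (by omega)
      have hc : ¬ σ (Sum.inl i) < σ (Sum.inr i) := by rw [Fin.lt_def]; omega
      rw [if_neg hc, hl, hr]; simp
  refine ⟨h1, h2, ?_⟩
  rw [h1, h2]
  have hfil : Finset.univ.filter (fun i : Fin n => σ (Sum.inl i) < σ (Sum.inr i))
      = Finset.univ.filter (fun i : Fin n => ¬ σ (Sum.inr i) < σ (Sum.inl i)) := by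
    apply Finset.filter_congr
    intro i _
    rcases hσ i with ⟨e1, e2⟩ | ⟨e1, e2⟩ <;>
      simp only [Fin.lt_def, e1, e2, eq_iff_iff] <;> constructor <;> omega
  rw [hfil, Finset.sum_filter_add_sum_filter_not, hsum]
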